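/- Let p and q be odd primes such that q divides R_p but q^2 does not divide R_p, where R_n = (10^n - 1)/9. Then for every integer r with 0 < r < q, q^2 does not divide R_{pr}. -/

import Mathlib

def repunit (n : ℕ) : ℕ := (10 ^ n - 1) / 9

lemma nine_mul_repunit (n : ℕ) : (9 : ℤ) * repunit n = 10 ^ n - 1 := by
  have h9 : (9 : ℕ) ∣ 10 ^ n - 1 := by
    simpa using Nat.sub_dvd_pow_sub_pow 10 1 n
  have h : 9 * repunit n = 10 ^ n - 1 := Nat.mul_div_cancel' h9
  have h1 : (1 : ℕ) ≤ 10 ^ n := Nat.one_le_pow _ _ (by norm_num)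
  have := congrArg (Nat.cast : ℕ → ℤ) h
  rw [Nat.cast_mul, Nat.cast_sub h1] at this
  push_cast at this ⊢
  linarith

lemma repunit_mul_eq (m n : ℕ) :
    (repunit (m * n) : ℤ) = repunit m * ∑ i ∈ Finset.range n, ((10 : ℤ) ^ m) ^ i := by
  have key : (9 : ℤ) * repunit (m * n) =
      9 * (repunit m * ∑ i ∈ Finset.range n, ((10 : ℤ) ^ m) ^ i) := by
    rw [nine_mul_repunit]
    have := geom_sum_mul ((10 : ℤ) ^ m) n
    rw [pow_mul]
    have h9 : ((10 : ℤ) ^ m - 1) = 9 * repunit m := (nine_mul_repunit m).symm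
    calc ((10 : ℤ) ^ m) ^ n - 1
        = (∑ i ∈ Finset.range n, ((10 : ℤ) ^ m) ^ i) * ((10 : ℤ) ^ m - 1) := this.symm
      _ = (∑ i ∈ Finset.range n, ((10 : ℤ) ^ m) ^ i) * (9 * repunit m) := by rw [h9]
      _ = 9 * (repunit m * ∑ i ∈ Finset.range n, ((10 : ℤ) ^ m) ^ i) := by ring
  exact mul_left_cancel₀ (by norm_num : (9 : ℤ) ≠ 0) key

theorem sq_not_dvd_repunit_mul (p q : ℕ) (hp : p.Prime) (hpo : Odd p)
    (hq : q.Prime) (hqo : Odd q) (h1 : q ∣ repunit p) (h2 : ¬ q ^ 2 ∣ repunit p) :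
    ∀ r : ℕ, 0 < r → r < q → ¬ q ^ 2 ∣ repunit (p * r) := by
  intro r hr hrq hdvd
  set S : ℤ := ∑ i ∈ Finset.range r, ((10 : ℤ) ^ p) ^ i with hS
  -- q ∣ 10^p - 1
  have hq10 : (q : ℤ) ∣ (10 : ℤ) ^ p - 1 := by
    rw [← nine_mul_repunit]
    exact Dvd.dvd.mul_left (Int.natCast_dvd_natCast.mpr h1) 9
  -- q ∣ S - r
  have hSr : (q : ℤ) ∣ S - r := by
    have : S - r = ∑ i ∈ Finset.range r, (((10 : ℤ) ^ p) ^ i - 1) := by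
      rw [Finset.sum_sub_distrib, Finset.sum_const, Finset.card_range]
      simp
      exact hS
    rw [this]
    refine Finset.dvd_sum fun i _ => hq10.trans ?_
    simpa using sub_dvd_pow_sub_pow ((10 : ℤ) ^ p) 1 i
  -- q ∤ S
  have hqS : ¬ (q : ℤ) ∣ S := by
    intro hdS
    have hqr : (q : ℤ) ∣ (r : ℤ) := by
      have := dvd_sub hdS hSr
      simpa using this
    exact Nat.not_dvd_of_pos_of_lt hr hrq (Int.natCast_dvd_natCast.mp hqr)
  -- write repunit p = q * m with q ∤ m
  obtain ⟨m, hm⟩ := h1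
  have hqm : ¬ q ∣ m := fun ⟨k, hk⟩ => h2 ⟨k, by rw [hm, hk]; ring⟩
  -- derive contradiction
  have hZ : (q : ℤ) ^ 2 ∣ (repunit (p * r) : ℤ) := by
    exact_mod_cast Int.natCast_dvd_natCast.mpr hdvd
  rw [repunit_mul_eq, hm] at hZ
  have : (q : ℤ) ∣ (m : ℤ) * S := by
    rcases hZ with ⟨c, hc⟩
    refine ⟨c, mul_left_cancel₀ (by exact_mod_cast hq.ne_zero : (q : ℤ) ≠ 0) ?_⟩
    push_cast at hc ⊢
    linarith [hc]
  rcases (Int.Prime.dvd_mul' hq this) with h | h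
  · exact hqm (Int.natCast_dvd_natCast.mp h)
  · exact hqS h
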